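/- Let Q* : S×A → ℝ, let π* be a policy greedy with respect to Q*, and set Π* := Π^{π*}, A* := I + α(γ D P Π* − D). Let (Q_k)_{k≥0} and (Q^L_k)_{k≥0} be sequences in ℝ^{S×A} and (w_k)_{k≥0} arbitrary vectors in ℝ^{S×A}; for each k let π_k be a policy greedy with respect to Q_k, and set Π_k := Π^{π_k}, A_k := I + α(γ D P Π_k − D). Suppose that for all k ≥ 0: Q_{k+1} − Q* = A_k(Q_k − Q*) + αγ D P(Π_k − Π*)Q* + α w_k and Q^L_{k+1} − Q* = A*(Q^L_k − Q*) + α w_k. If Q^L_0 − Q* ≤ Q_0 − Q* componentwise, then Q^L_k − Q* ≤ Q_k − Q* componentwise for all k ≥ 0. -/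

import Mathlib

open Matrix

/-- The policy matrix `Π^π ∈ ℝ^{S × (S×A)}` of a deterministic policy `π : S → A`:
`Π^π(s, (s', a)) = 1` if `s' = s` and `a = π s`, else `0`. -/
def policyMatrix {S A : Type*} [DecidableEq S] [DecidableEq A] (π : S → A) :
    Matrix S (S × A) ℝ :=
  Matrix.of fun s p => if p.1 = s ∧ p.2 = π s then (1 : ℝ) else 0

/-- A deterministic policy `π` is greedy with respect to `Q : S × A → ℝ` if
`Q(s, π s) = max_{a} Q(s, a)` for every state `s`. -/
def IsGreedy {S A : Type*} [Fintype A] [Nonempty A] (π : S → A) (Q : S × A → ℝ) : Prop :=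
  ∀ s, Q (s, π s) = ⨆ a : A, Q (s, a)

lemma policyMatrix_mulVec {S A : Type*} [Fintype S] [Fintype A]
    [DecidableEq S] [DecidableEq A] (π : S → A) (v : S × A → ℝ) (s : S) :
    (policyMatrix π).mulVec v s = v (s, π s) := by
  classical
  have h : ∀ p : S × A, (p.1 = s ∧ p.2 = π s) ↔ p = (s, π s) := by
    intro p; constructor
    · rintro ⟨h1, h2⟩; exact Prod.ext h1 h2
    · rintro rfl; exact ⟨rfl, rfl⟩
  simp only [Matrix.mulVec, dotProduct, policyMatrix, Matrix.of_apply, h, ite_mul, one_mul,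
    zero_mul]
  simp

lemma mulVec_mono {n : Type*} [Fintype n] {M : Matrix n n ℝ} (hM : ∀ i j, 0 ≤ M i j)
    {x y : n → ℝ} (h : x ≤ y) : M.mulVec x ≤ M.mulVec y := by
  intro i
  apply Finset.sum_le_sum
  intro j _
  exact mul_le_mul_of_nonneg_left (h j) (hM i j)

lemma mulVec_nonneg {m n : Type*} [Fintype n] {M : Matrix m n ℝ} (hM : ∀ i j, 0 ≤ M i j)
    {x : n → ℝ} (hx : 0 ≤ x) : 0 ≤ M.mulVec x := by
  intro i
  exact Finset.sum_nonneg fun j _ => mul_nonneg (hM i j) (hx j)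

/-- The lower comparison system bounds the Q-learning iterates from below:
if `Q^L_0 − Q* ≤ Q_0 − Q*` componentwise, then `Q^L_k − Q* ≤ Q_k − Q*` for all `k`. -/
theorem lower_comparison_system_bound
    {S A : Type*} [Fintype S] [Fintype A] [Nonempty S] [Nonempty A]
    [DecidableEq S] [DecidableEq A]
    (d : S × A → ℝ) (hd : ∀ p, 0 < d p ∧ d p ≤ 1)
    (P : Matrix (S × A) S ℝ) (hP : ∀ p s, 0 ≤ P p s) (hProw : ∀ p, ∑ s, P p s = 1)
    (α γ : ℝ) (hα : 0 < α ∧ α < 1) (hγ : 0 ≤ γ ∧ γ < 1)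
    (Qstar : S × A → ℝ) (πstar : S → A) (hπstar : IsGreedy πstar Qstar)
    (Q QL : ℕ → S × A → ℝ) (w : ℕ → S × A → ℝ)
    (π : ℕ → S → A) (hπ : ∀ k, IsGreedy (π k) (Q k))
    (hQ : ∀ k, Q (k + 1) - Qstar =
      ((1 : Matrix (S × A) (S × A) ℝ) +
        α • (γ • (Matrix.diagonal d * P * policyMatrix (π k)) - Matrix.diagonal d)).mulVec
        (Q k - Qstar)
      + (α * γ) •
          (Matrix.diagonal d * P * (policyMatrix (π k) - policyMatrix πstar)).mulVec Qstar
      + α • w k)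
    (hQL : ∀ k, QL (k + 1) - Qstar =
      ((1 : Matrix (S × A) (S × A) ℝ) +
        α • (γ • (Matrix.diagonal d * P * policyMatrix πstar) - Matrix.diagonal d)).mulVec
        (QL k - Qstar)
      + α • w k)
    (h0 : QL 0 - Qstar ≤ Q 0 - Qstar) :
    ∀ k, QL k - Qstar ≤ Q k - Qstar := by
  classical
  obtain ⟨hα0, hα1⟩ := hα
  obtain ⟨hγ0, hγ1⟩ := hγ
  set M : Matrix (S × A) S ℝ := Matrix.diagonal d * P with hM
  set Astar : Matrix (S × A) (S × A) ℝ :=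
    (1 : Matrix (S × A) (S × A) ℝ) +
      α • (γ • (M * policyMatrix πstar) - Matrix.diagonal d) with hAstar
  -- M has nonneg entries
  have hMnn : ∀ i j, 0 ≤ M i j := by
    intro i j
    rw [hM, Matrix.diagonal_mul]
    exact mul_nonneg (hd i).1.le (hP i j)
  -- M * Π* has nonneg entries
  have hMPnn : ∀ i j, 0 ≤ (M * policyMatrix πstar) i j := by
    intro i j
    apply Finset.sum_nonneg
    intro s _
    apply mul_nonneg (hMnn i s)
    unfold policyMatrix
    simp only [Matrix.of_apply]
    split <;> norm_num
  -- A* has nonneg entries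
  have hAnn : ∀ i j, 0 ≤ Astar i j := by
    intro i j
    rw [hAstar]
    simp only [Matrix.add_apply, Matrix.smul_apply, Matrix.sub_apply, Matrix.one_apply,
      Matrix.diagonal_apply, smul_eq_mul]
    by_cases h : i = j
    · subst h
      simp only [if_pos rfl, if_true]
      have h1 := (hd i).1
      have h2 := (hd i).2
      have h3 := hMPnn i i
      nlinarith [mul_nonneg (mul_nonneg hα0.le hγ0) h3, mul_le_mul_of_nonneg_left h2 hα0.le]
    · simp only [if_neg h]
      have h3 := hMPnn i j
      nlinarith [mul_nonneg (mul_nonneg hα0.le hγ0) h3]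
  intro k
  induction k with
  | zero => exact h0
  | succ k ih =>
    rw [hQ k, hQL k]
    set N : Matrix (S × A) (S × A) ℝ := M * (policyMatrix (π k) - policyMatrix πstar) with hN
    have hAk : (1 : Matrix (S × A) (S × A) ℝ) +
        α • (γ • (M * policyMatrix (π k)) - Matrix.diagonal d)
        = Astar + (α * γ) • N := by
      rw [hN, hAstar, Matrix.mul_sub]
      module
    -- key identity
    have hkey : ((1 : Matrix (S × A) (S × A) ℝ) +
        α • (γ • (M * policyMatrix (π k)) - Matrix.diagonal d)).mulVec (Q k - Qstar)
        + (α * γ) • N.mulVec Qstar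
        = Astar.mulVec (Q k - Qstar) + (α * γ) • N.mulVec (Q k) := by
      rw [hAk, Matrix.add_mulVec, Matrix.smul_mulVec, add_assoc, ← smul_add,
        ← Matrix.mulVec_add, sub_add_cancel]
    rw [hkey]
    -- positivity of (α*γ) • N.mulVec (Q k)
    have hpos : 0 ≤ (α * γ) • N.mulVec (Q k) := by
      apply smul_nonneg (mul_nonneg hα0.le hγ0)
      rw [hN, ← Matrix.mulVec_mulVec]
      apply mulVec_nonneg hMnn
      intro s
      rw [Pi.zero_apply, Matrix.sub_mulVec, Pi.sub_apply, policyMatrix_mulVec,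
        policyMatrix_mulVec, sub_nonneg, hπ k s]
      exact le_ciSup (f := fun a => Q k (s, a)) (Set.Finite.bddAbove (Set.finite_range _)) (πstar s)
    calc Astar.mulVec (QL k - Qstar) + α • w k
        ≤ Astar.mulVec (Q k - Qstar) + α • w k := by
          exact add_le_add_left (mulVec_mono hAnn ih) _
      _ ≤ Astar.mulVec (Q k - Qstar) + (α * γ) • N.mulVec (Q k) + α • w k := by
          apply add_le_add_left
          exact le_add_of_nonneg_right hpos
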